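/- Let f : ℕ → (formal power series over ℚ) be defined recursively by f(0) = 0 and f(n+1) = f(n)^d + X, where d ≥ 2. Then for each n, the coefficients of f(n) up to degree n(d-1) agree with the coefficients of the series F = \sum_{k≥0} C_k^{(d)} X^{k(d-1)+1}, i.e., the iterates converge coefficientwise to F. -/

import Mathlib

open PowerSeries

/-- The Fuss–Catalan number `C_k^{(d)} = (1/(k(d-1)+1)) * binomial (d*k) k`. -/
def fussCatalan (d k : ℕ) : ℕ := (d * k).choose k / (k * (d - 1) + 1)

/-- The power series `F = ∑_{k≥0} C_k^{(d)} X^{k(d-1)+1}` over `ℚ`: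
its `m`-th coefficient is `C_k^{(d)}` when `m = k(d-1)+1`, and `0` otherwise. -/
noncomputable def fussCatalanSeries (d : ℕ) : PowerSeries ℚ :=
  PowerSeries.mk fun m =>
    if m ≠ 0 ∧ (d - 1) ∣ (m - 1) then (fussCatalan d ((m - 1) / (d - 1)) : ℚ) else 0

noncomputable def Bser (s n : ℕ) : PowerSeries ℚ :=
  PowerSeries.mk fun N => if s ∣ N then ((n + N / s).choose (N / s) : ℚ) else 0

lemma coeff_Bser (s n N : ℕ) :
    coeff N (Bser s n) = if s ∣ N then ((n + N / s).choose (N / s) : ℚ) else 0 :=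
  coeff_mk _ _

lemma coeff_u_mul (B : PowerSeries ℚ) (s N : ℕ) :
    coeff N ((1 - X ^ s) * B) =
      coeff N B - if s ≤ N then coeff (N - s) B else 0 := by
  rw [sub_mul, one_mul, map_sub, coeff_X_pow_mul']

lemma u_mul_Bser_zero {s : ℕ} (hs : 1 ≤ s) : (1 - X ^ s) * Bser s 0 = 1 := by
  ext N
  rw [coeff_u_mul]
  simp only [coeff_Bser]
  rcases eq_or_ne N 0 with rfl | hN
  · simp [Nat.one_le_iff_ne_zero.mp hs]
  · rw [PowerSeries.coeff_one, if_neg hN]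
    by_cases hdvd : s ∣ N
    · obtain ⟨i, rfl⟩ := hdvd
      have hi : 0 < i := Nat.pos_of_ne_zero (fun h => hN (by rw [h, mul_zero]))
      have hsle : s ≤ s * i := Nat.le_mul_of_pos_right s hi
      have hd2 : s ∣ s * i - s := Nat.dvd_sub (Dvd.intro i rfl) dvd_rfl
      have h1 : s * i / s = i := Nat.mul_div_cancel_left _ (by omega)
      have h2 : (s * i - s) / s = i - 1 := by
        rw [show s * i - s = s * (i - 1) from by rw [Nat.mul_sub, mul_one],
          Nat.mul_div_cancel_left _ (by omega)]
      rw [if_pos (Dvd.intro i rfl), if_pos hsle, if_pos hd2, h1, h2]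
      simp
    · rw [if_neg hdvd]
      by_cases hsle : s ≤ N
      · rw [if_pos hsle, if_neg (fun hh => hdvd
          ((Nat.sub_add_cancel hsle) ▸ Nat.dvd_add hh dvd_rfl))]
        ring
      · rw [if_neg hsle]; ring

lemma u_mul_Bser_succ {s : ℕ} (hs : 1 ≤ s) (n : ℕ) :
    (1 - X ^ s) * Bser s (n + 1) = Bser s n := by
  ext N
  rw [coeff_u_mul]
  simp only [coeff_Bser]
  by_cases hdvd : s ∣ N
  · obtain ⟨i, rfl⟩ := hdvd
    have h1 : s * i / s = i := Nat.mul_div_cancel_left _ (by omega)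
    rcases Nat.eq_zero_or_pos i with rfl | hi
    · rw [if_neg (by omega : ¬ s ≤ s * 0), if_pos (Dvd.intro 0 rfl), h1]
      simp
    · have hsle : s ≤ s * i := Nat.le_mul_of_pos_right s hi
      have hd2 : s ∣ s * i - s := Nat.dvd_sub (Dvd.intro i rfl) dvd_rfl
      have h2 : (s * i - s) / s = i - 1 := by
        rw [show s * i - s = s * (i - 1) from by rw [Nat.mul_sub, mul_one],
          Nat.mul_div_cancel_left _ (by omega)]
      rw [if_pos (Dvd.intro i rfl), if_pos hsle, if_pos hd2, h1, h2]
      obtain ⟨j, rfl⟩ : ∃ j, i = j + 1 := ⟨i - 1, by omega⟩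
      rw [show j + 1 - 1 = j from rfl,
        show n + 1 + (j + 1) = (n + (j + 1)) + 1 from by omega,
        Nat.choose_succ_succ' (n + (j + 1)) j,
        show n + 1 + j = n + (j + 1) from by omega]
      rw [if_pos (Dvd.intro (j + 1) rfl : s ∣ s * (j + 1))]
      push_cast; ring
  · rw [if_neg hdvd]
    by_cases hsle : s ≤ N
    · rw [if_pos hsle, if_neg (fun hh => hdvd
        ((Nat.sub_add_cancel hsle) ▸ Nat.dvd_add hh dvd_rfl)), if_neg hdvd]
      ring
    · rw [if_neg hsle, if_neg hdvd]; ring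

lemma u_pow_mul_Bser {s : ℕ} (hs : 1 ≤ s) (n : ℕ) :
    (1 - X ^ s) ^ (n + 1) * Bser s n = 1 := by
  induction n with
  | zero => simpa using u_mul_Bser_zero hs
  | succ n ih =>
    calc (1 - X ^ s) ^ (n + 1 + 1) * Bser s (n + 1)
        = (1 - X ^ s) ^ (n + 1) * ((1 - X ^ s) * Bser s (n + 1)) := by ring
      _ = 1 := by rw [u_mul_Bser_succ hs, ih]

lemma coeff_pp_mul (B : PowerSeries ℚ) (a : ℚ) (s N : ℕ) :
    coeff N ((1 - C a * X ^ s) * B) =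
      coeff N B - a * if s ≤ N then coeff (N - s) B else 0 := by
  rw [sub_mul, one_mul, map_sub, mul_assoc, coeff_C_mul, coeff_X_pow_mul', mul_ite, mul_zero]

lemma core_coeff {s : ℕ} (hs : 1 ≤ s) (j : ℕ) :
    coeff j ((1 - C (s + 1 : ℚ) * X ^ s) * Bser s j) = if j = 0 then 1 else 0 := by
  rw [coeff_pp_mul]
  simp only [coeff_Bser]
  rcases eq_or_ne j 0 with rfl | hj
  · rw [if_neg (by omega : ¬ s ≤ 0), if_pos (dvd_zero s)]
    simp
  · rw [if_neg hj]
    by_cases hdvd : s ∣ j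
    · obtain ⟨i, rfl⟩ := hdvd
      have hi : 0 < i := Nat.pos_of_ne_zero (fun h => hj (by rw [h, mul_zero]))
      have hsle : s ≤ s * i := Nat.le_mul_of_pos_right s hi
      have hd2 : s ∣ s * i - s := Nat.dvd_sub (Dvd.intro i rfl) dvd_rfl
      have h1 : s * i / s = i := Nat.mul_div_cancel_left _ (by omega)
      have h2 : (s * i - s) / s = i - 1 := by
        rw [show s * i - s = s * (i - 1) from by rw [Nat.mul_sub, mul_one],
          Nat.mul_div_cancel_left _ (by omega)]
      rw [if_pos (Dvd.intro i rfl), if_pos hsle, if_pos hd2, h1, h2]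
      -- need: choose (s*i + i) i = (s+1) * choose (s*i + (i-1)) (i-1) in ℚ
      obtain ⟨j, rfl⟩ : ∃ j, i = j + 1 := ⟨i - 1, by omega⟩
      have key : (s * (j + 1) + j) + 1 = ((s * (j + 1) + j) + 1) := rfl
      have hnat : (s * (j + 1) + j + 1) * (s * (j + 1) + j).choose j
          = (s * (j + 1) + j + 1).choose (j + 1) * (j + 1) := by
        simpa using Nat.add_one_mul_choose_eq (s * (j + 1) + j) j
      have hq : ((s * (j + 1) + j + 1 : ℕ) : ℚ) * ((s * (j + 1) + j).choose j : ℚ)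
          = ((s * (j + 1) + j + 1).choose (j + 1) : ℚ) * ((j + 1 : ℕ) : ℚ) := by
        exact_mod_cast congrArg (Nat.cast : ℕ → ℚ) hnat
      rw [show j + 1 - 1 = j from rfl,
        show s * (j + 1) + (j + 1) = s * (j + 1) + j + 1 from by omega]
      have hj1 : ((j + 1 : ℕ) : ℚ) ≠ 0 := by positivity
      have hmul : ((s * (j + 1) + j + 1 : ℕ) : ℚ) = ((s : ℚ) + 1) * ((j + 1 : ℕ) : ℚ) := by
        push_cast; ring
      rw [hmul] at hq
      field_simp at hq ⊢
      nlinarith [hq]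
    · rw [if_neg hdvd]
      by_cases hsle : s ≤ j
      · rw [if_pos hsle, if_neg (fun hh => hdvd
          ((Nat.sub_add_cancel hsle) ▸ Nat.dvd_add hh dvd_rfl))]
        ring
      · rw [if_neg hsle]; ring

lemma u_ne_zero {s : ℕ} (hs : 1 ≤ s) : (1 - X ^ s : PowerSeries ℚ) ≠ 0 := by
  intro h
  have h0 := congrArg (coeff 0) h
  rw [map_sub, PowerSeries.coeff_one, PowerSeries.coeff_X_pow] at h0
  rw [if_neg (by omega : ¬ (0 = s))] at h0
  norm_num at h0

lemma u_pow_mul_Bser_shift {s : ℕ} (hs : 1 ≤ s) {k m : ℕ} (hk : k ≤ m) :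
    (1 - X ^ s) ^ k * Bser s m = Bser s (m - k) := by
  have hcancel := pow_ne_zero (m - k + 1) (u_ne_zero hs)
  apply mul_left_cancel₀ hcancel
  rw [u_pow_mul_Bser hs (m - k), ← mul_assoc, ← pow_add]
  rw [show m - k + 1 + k = m + 1 from by omega]
  exact u_pow_mul_Bser hs m

noncomputable def pser (s : ℕ) : PowerSeries ℚ := X * (1 - X ^ s)

lemma coeff_p_pow_mul {s : ℕ} (hs : 1 ≤ s) (k m : ℕ) :
    coeff m ((pser s) ^ k * ((1 - C (s + 1 : ℚ) * X ^ s) * Bser s m)) =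
      if k = m then 1 else 0 := by
  by_cases hk : k ≤ m
  · have hrw : (pser s) ^ k * ((1 - C (s + 1 : ℚ) * X ^ s) * Bser s m)
        = X ^ k * ((1 - C (s + 1 : ℚ) * X ^ s) * ((1 - X ^ s) ^ k * Bser s m)) := by
      rw [pser, mul_pow]; ring
    rw [hrw, u_pow_mul_Bser_shift hs hk, coeff_X_pow_mul', if_pos hk, core_coeff hs]
    have : (m - k = 0) ↔ (k = m) := by omega
    simp [this]
  · have hdvd : (X : PowerSeries ℚ) ^ k ∣
        (pser s) ^ k * ((1 - C (s + 1 : ℚ) * X ^ s) * Bser s m) :=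
      dvd_mul_of_dvd_left (pow_dvd_pow_of_dvd (Dvd.intro _ rfl) k) _
    rw [PowerSeries.X_pow_dvd_iff.mp hdvd m (by omega), if_neg (by omega)]

lemma star_poly {s : ℕ} (hs : 1 ≤ s) (m : ℕ) (q : Polynomial ℚ) :
    coeff m (Polynomial.aeval (pser s) q * ((1 - C (s + 1 : ℚ) * X ^ s) * Bser s m)) =
      q.coeff m := by
  induction q using Polynomial.induction_on' with
  | add p q hp hq => rw [map_add, add_mul, map_add, hp, hq, Polynomial.coeff_add]
  | monomial n a =>
    rw [Polynomial.aeval_monomial, Polynomial.coeff_monomial]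
    have halg : algebraMap ℚ (PowerSeries ℚ) a = C a := rfl
    rw [halg, mul_assoc, coeff_C_mul, coeff_p_pow_mul hs]
    split_ifs with h1 h2 h3 <;> first | ring | (exfalso; omega)

lemma pow_sub_pow_X_dvd {A B : PowerSeries ℚ} (hA : X ∣ A) (hB : X ∣ B)
    (e j : ℕ) (h : X ^ j ∣ A - B) : X ^ (e - 1 + j) ∣ A ^ e - B ^ e := by
  rw [← geom_sum₂_mul, pow_add]
  refine mul_dvd_mul (Finset.dvd_sum fun i hi => ?_) h
  rw [Finset.mem_range] at hi
  have : (X : PowerSeries ℚ) ^ (e - 1) = X ^ i * X ^ (e - 1 - i) := by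
    rw [← pow_add]; congr 1; omega
  rw [this]
  exact mul_dvd_mul (pow_dvd_pow_of_dvd hA i) (pow_dvd_pow_of_dvd hB (e - 1 - i))

lemma approx_unique {e : ℕ} (he : 2 ≤ e) (A B c : PowerSeries ℚ) (M : ℕ)
    (hA : X ∣ A) (hB : X ∣ B)
    (hAe : X ^ M ∣ A - (A ^ e + c)) (hBe : X ^ M ∣ B - (B ^ e + c)) :
    X ^ M ∣ A - B := by
  suffices H : ∀ j, X ^ (min j M) ∣ A - B by
    have := H M
    rwa [min_self] at this
  intro j
  induction j with
  | zero => simpa using one_dvd _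
  | succ j ih =>
    have hpow := pow_sub_pow_X_dvd hA hB e (min j M) ih
    have hsplit : A - B = (A - (A ^ e + c)) - (B - (B ^ e + c)) + (A ^ e - B ^ e) := by
      ring
    rw [hsplit]
    refine dvd_add (dvd_sub ?_ ?_) ?_
    · exact dvd_trans (pow_dvd_pow _ (by omega)) hAe
    · exact dvd_trans (pow_dvd_pow _ (by omega)) hBe
    · exact dvd_trans (pow_dvd_pow _ (by omega)) hpow

lemma aeval_pser_dvd {s : ℕ} (M : ℕ) (q : Polynomial ℚ) (hq : ∀ i < M, q.coeff i = 0) :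
    (X : PowerSeries ℚ) ^ M ∣ Polynomial.aeval (pser s) q := by
  rw [Polynomial.aeval_eq_sum_range]
  refine Finset.dvd_sum fun i _ => ?_
  by_cases hi : i < M
  · rw [hq i hi, zero_smul]
    exact dvd_zero _
  · rw [smul_eq_C_mul]
    exact dvd_mul_of_dvd_right (dvd_trans (pow_dvd_pow X (show M ≤ i by omega))
      (pow_dvd_pow_of_dvd (Dvd.intro _ rfl) i)) _

lemma X_dvd_aeval_pser {s : ℕ} (q : Polynomial ℚ) (hq : q.coeff 0 = 0) :
    (X : PowerSeries ℚ) ∣ Polynomial.aeval (pser s) q := by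
  rw [Polynomial.aeval_eq_sum_range]
  refine Finset.dvd_sum fun i _ => ?_
  rcases Nat.eq_zero_or_pos i with rfl | hi
  · rw [hq, zero_smul]; exact dvd_zero _
  · rw [smul_eq_C_mul]
    refine dvd_mul_of_dvd_right (dvd_trans ?_ (pow_dvd_pow_of_dvd (Dvd.intro _ rfl) i)) _
    exact dvd_pow_self _ (by omega)

lemma fussCatalan_zero (d : ℕ) : fussCatalan d 0 = 1 := by
  simp [fussCatalan]

lemma fussCatalan_cast (s j : ℕ) :
    (fussCatalan (s + 1) (j + 1) : ℚ) =
      (((s + 1) * (j + 1) + 1).choose (j + 1) : ℚ)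
        - (s + 1) * (((s + 1) * (j + 1)).choose j : ℚ) := by
  set n := (s + 1) * (j + 1) with hn
  set t := (j + 1) * s + 1 with ht
  set a := (n + 1).choose (j + 1) with ha
  set b := n.choose j with hb
  set c := n.choose (j + 1) with hc
  have hii : a = b + c := Nat.choose_succ_succ' n j
  have hi : c * (j + 1) = b * t := by
    have h1 := Nat.choose_succ_right_eq n j
    have h2 : n - j = t := by
      have e1 : n = s * (j + 1) + j + 1 := by rw [hn]; ring
      have e2 : t = s * (j + 1) + 1 := by rw [ht]; ring
      omega
    rw [← hc, ← hb] at h1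
    rw [h1, h2]
  -- s * b ≤ c
  have hsb : s * b ≤ c := by
    have : c * (j + 1) = s * b * (j + 1) + b := by rw [hi, ht]; ring
    nlinarith [this]
  have hge : (s + 1) * b ≤ a := by
    have : a = b + c := hii
    nlinarith [hsb]
  have hkey : c = t * (a - (s + 1) * b) := by
    have hcast : (c : ℚ) = (t : ℚ) * ((a : ℚ) - (s + 1) * (b : ℚ)) := by
      have hi' : (c : ℚ) * ((j : ℚ) + 1) = (b : ℚ) * (((j : ℚ) + 1) * s + 1) := by
        have : (t : ℚ) = ((j : ℚ) + 1) * s + 1 := by rw [ht]; push_cast; ring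
        rw [← this]
        exact_mod_cast hi
      have hii' : (a : ℚ) = (b : ℚ) + (c : ℚ) := by exact_mod_cast hii
      have ht' : (t : ℚ) = ((j : ℚ) + 1) * (s : ℚ) + 1 := by rw [ht]; push_cast; ring
      rw [ht']
      linear_combination (-(s : ℚ)) * hi' + (-(((j : ℚ) + 1) * s + 1)) * hii'
    have : ((t * (a - (s + 1) * b) : ℕ) : ℚ) = (t : ℚ) * ((a : ℚ) - (s + 1) * (b : ℚ)) := by
      push_cast [Nat.cast_sub hge]
      ring
    exact_mod_cast hcast.trans this.symm
  have hdiv : fussCatalan (s + 1) (j + 1) = a - (s + 1) * b := by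
    rw [fussCatalan, Nat.succ_sub_one, ← hn, ← hc, show (j+1) * s + 1 = t from rfl, hkey,
      Nat.mul_div_cancel_left _ (by omega)]
  rw [hdiv]
  push_cast [Nat.cast_sub hge]
  ring

theorem key {s : ℕ} (hs : 1 ≤ s) (G : PowerSeries ℚ) (hG0 : constantCoeff G = 0)
    (hGeq : G = G ^ (s + 1) + X) :
    ∀ m, coeff m G = coeff m (fussCatalanSeries (s + 1)) := by
  have hXG : (X : PowerSeries ℚ) ∣ G := by
    rw [PowerSeries.X_dvd_iff]; exact hG0
  intro m
  rw [fussCatalanSeries, coeff_mk, Nat.add_sub_cancel]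
  rcases Nat.eq_zero_or_pos m with rfl | hm
  · rw [if_neg (by simp), coeff_zero_eq_constantCoeff]
    exact hG0
  set M := m + 1 with hM
  set q := trunc M G with hq
  set V := Polynomial.aeval (pser s) q with hV
  -- coefficients of q below M agree with G
  have hqc : ∀ i < M, q.coeff i = coeff i G := by
    intro i hi
    rw [hq, coeff_trunc, if_pos hi]
  have hq0 : q.coeff 0 = 0 := by
    rw [hqc 0 (by omega), coeff_zero_eq_constantCoeff]; exact hG0
  have hqG : (X : PowerSeries ℚ) ^ M ∣ (q : PowerSeries ℚ) - G := by
    rw [PowerSeries.X_pow_dvd_iff]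
    intro i hi
    rw [map_sub, Polynomial.coeff_coe, hqc i hi, sub_self]
  have hq0' : constantCoeff (q : PowerSeries ℚ) = 0 := by
    rw [← coeff_zero_eq_constantCoeff_apply, Polynomial.coeff_coe]
    exact hq0
  have hXq : (X : PowerSeries ℚ) ∣ (q : PowerSeries ℚ) := by
    rw [PowerSeries.X_dvd_iff]
    exact hq0'
  -- the polynomial q - q^(s+1) - X has vanishing coefficients below M
  have hWpow : (X : PowerSeries ℚ) ^ M ∣ (q : PowerSeries ℚ) ^ (s + 1) - G ^ (s + 1) := by
    have := pow_sub_pow_X_dvd hXq hXG (s + 1) M hqG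
    exact dvd_trans (pow_dvd_pow _ (by omega)) this
  have hW : ∀ i < M, (q - q ^ (s + 1) - Polynomial.X).coeff i = 0 := by
    intro i hi
    have h1 : (q ^ (s + 1)).coeff i = coeff i (G ^ (s + 1)) := by
      have h2 := (PowerSeries.X_pow_dvd_iff.mp hWpow) i hi
      rw [map_sub, sub_eq_zero] at h2
      rw [← Polynomial.coeff_coe, Polynomial.coe_pow, h2]
    have h3 : coeff i G - coeff i (G ^ (s + 1)) - coeff i X = 0 := by
      rw [← map_sub, ← map_sub,
        show G - G ^ (s + 1) - X = 0 from by linear_combination hGeq, map_zero]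
    rw [Polynomial.coeff_sub, Polynomial.coeff_sub, h1, hqc i hi,
      show (Polynomial.X : Polynomial ℚ).coeff i = coeff i (X : PowerSeries ℚ) from by
        rw [← Polynomial.coe_X, Polynomial.coeff_coe]]
    exact h3
  have hVeq : (X : PowerSeries ℚ) ^ M ∣ V - (V ^ (s + 1) + pser s) := by
    have hrw : V - (V ^ (s + 1) + pser s)
        = Polynomial.aeval (pser s) (q - q ^ (s + 1) - Polynomial.X) := by
      rw [map_sub, map_sub, map_pow, Polynomial.aeval_X, hV]; ring
    rw [hrw]
    exact aeval_pser_dvd M _ hW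
  have hXeq : (X : PowerSeries ℚ) ^ M ∣ X - ((X : PowerSeries ℚ) ^ (s + 1) + pser s) := by
    have : X - ((X : PowerSeries ℚ) ^ (s + 1) + pser s) = 0 := by
      rw [pser]; ring
    rw [this]; exact dvd_zero _
  have hXV : (X : PowerSeries ℚ) ∣ V := X_dvd_aeval_pser q hq0
  have hVX : (X : PowerSeries ℚ) ^ M ∣ V - X :=
    approx_unique (by omega) V X (pser s) M hXV dvd_rfl hVeq hXeq
  -- main computation
  set E := (1 - C (s + 1 : ℚ) * X ^ s) * Bser s m with hE
  have step1 : coeff m G = coeff m (V * E) := by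
    rw [star_poly hs m q, hqc m (by omega)]
  have step2 : coeff m ((V - X) * E) = 0 := by
    refine (PowerSeries.X_pow_dvd_iff.mp (dvd_mul_of_dvd_left hVX E)) m (by omega)
  have step3 : coeff m (V * E) = coeff m (X * E) := by
    have : V * E = X * E + (V - X) * E := by ring
    rw [this, map_add, step2, add_zero]
  obtain ⟨m', rfl⟩ : ∃ m', m = m' + 1 := ⟨m - 1, by omega⟩
  have step4 : coeff (m' + 1) ((X : PowerSeries ℚ) * E) = coeff m' E := coeff_succ_X_mul m' E
  rw [step1, step3, step4, hE, coeff_pp_mul]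
  simp only [coeff_Bser]
  rw [Nat.add_sub_cancel]
  by_cases hdvd : s ∣ m'
  · obtain ⟨k, hk⟩ := hdvd
    rcases Nat.eq_zero_or_pos k with rfl | hkpos
    · have hm0 : m' = 0 := by omega
      subst hm0
      rw [if_pos (dvd_zero s), if_neg (by omega : ¬ s ≤ 0),
        if_pos (by exact ⟨by omega, dvd_zero s⟩)]
      norm_num [fussCatalan_zero]
    · obtain ⟨j, rfl⟩ : ∃ j, k = j + 1 := ⟨k - 1, by omega⟩
      subst hk
      have hsle : s ≤ s * (j + 1) := Nat.le_mul_of_pos_right s (by omega)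
      have hd2 : s ∣ s * (j + 1) - s := Nat.dvd_sub (Dvd.intro (j+1) rfl) dvd_rfl
      have h1 : s * (j + 1) / s = j + 1 := Nat.mul_div_cancel_left _ (by omega)
      have h2 : (s * (j + 1) - s) / s = j := by
        rw [show s * (j + 1) - s = s * j from by rw [Nat.mul_succ]; omega,
          Nat.mul_div_cancel_left _ (by omega)]
      rw [if_pos (Dvd.intro (j+1) rfl), if_pos hsle, if_pos hd2, h1, h2,
        if_pos (⟨by omega, Dvd.intro (j+1) rfl⟩ :
          (s * (j + 1) + 1 ≠ 0 ∧ s ∣ s * (j + 1))),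
        show s * (j + 1) + 1 + (j + 1) = (s + 1) * (j + 1) + 1 from by ring,
        show s * (j + 1) + 1 + j = (s + 1) * (j + 1) from by ring,
        fussCatalan_cast s j]
  · rw [if_neg hdvd,
      if_neg (fun h : (m' + 1 ≠ 0 ∧ s ∣ m') => hdvd h.2)]
    by_cases hsle : s ≤ m'
    · rw [if_pos hsle, if_neg (fun hh => hdvd
        ((Nat.sub_add_cancel hsle) ▸ Nat.dvd_add hh dvd_rfl))]
      ring
    · rw [if_neg hsle]; ring


/-- The iterates `f 0 = 0`, `f (n+1) = (f n)^d + X` of the `d`-multibrot polynomial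
converge coefficientwise to `F = ∑_{k≥0} C_k^{(d)} X^{k(d-1)+1}`. -/
theorem multibrot_iterates_tendsto_fussCatalanSeries (d : ℕ) (hd : 2 ≤ d)
    (f : ℕ → PowerSeries ℚ) (h0 : f 0 = 0)
    (hrec : ∀ n : ℕ, f (n + 1) = (f n) ^ d + X) :
    ∀ m : ℕ, ∃ N : ℕ, ∀ n ≥ N,
      coeff m (f n) = coeff m (fussCatalanSeries d) := by
  obtain ⟨s, rfl⟩ : ∃ s, d = s + 1 := ⟨d - 1, by omega⟩
  have hs : 1 ≤ s := by omega
  have hX : ∀ n, (X : PowerSeries ℚ) ∣ f n := by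
    intro n
    induction n with
    | zero => rw [h0]; exact dvd_zero _
    | succ n ih =>
      rw [hrec]
      exact dvd_add (dvd_pow ih (by omega)) dvd_rfl
  have hstab : ∀ n, (X : PowerSeries ℚ) ^ (n + 1) ∣ f (n + 1) - f n := by
    intro n
    induction n with
    | zero =>
      have hfx : f 1 - f 0 = X := by rw [hrec, h0]; simp
      simpa [hfx] using dvd_refl (X : PowerSeries ℚ)
    | succ n ih =>
      have hr : f (n + 2) - f (n + 1) = f (n + 1) ^ (s + 1) - f n ^ (s + 1) := by
        rw [hrec (n + 1), hrec n]; ring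
      rw [hr]
      have := pow_sub_pow_X_dvd (hX (n + 1)) (hX n) (s + 1) (n + 1) ih
      exact dvd_trans (pow_dvd_pow _ (by omega)) this
  have hcoeff : ∀ m n, m ≤ n → coeff m (f n) = coeff m (f m) := by
    intro m n hmn
    induction n, hmn using Nat.le_induction with
    | base => rfl
    | succ n hn ih =>
      have h := (PowerSeries.X_pow_dvd_iff.mp (hstab n)) m (by omega)
      rw [map_sub, sub_eq_zero] at h
      rw [h, ih]
  set G : PowerSeries ℚ := PowerSeries.mk (fun m => coeff m (f m)) with hG
  have hGm : ∀ m, coeff m G = coeff m (f m) := fun m => coeff_mk _ _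
  have hG0 : constantCoeff G = 0 := by
    rw [← coeff_zero_eq_constantCoeff_apply, hGm 0, h0, map_zero]
  have hXG : (X : PowerSeries ℚ) ∣ G := by rw [PowerSeries.X_dvd_iff]; exact hG0
  have hGdvd : ∀ m, (X : PowerSeries ℚ) ^ (m + 1) ∣ G - f m := by
    intro m
    rw [PowerSeries.X_pow_dvd_iff]
    intro i hi
    rw [map_sub, hGm i, hcoeff i m (by omega), sub_self]
  have hGeq : G = G ^ (s + 1) + X := by
    ext m
    have e1 : coeff m (G ^ (s + 1)) = coeff m (f m ^ (s + 1)) := by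
      have hp := pow_sub_pow_X_dvd hXG (hX m) (s + 1) (m + 1) (hGdvd m)
      have := (PowerSeries.X_pow_dvd_iff.mp (dvd_trans
        (pow_dvd_pow X (show m + 1 ≤ s + 1 - 1 + (m + 1) by omega)) hp)) m (by omega)
      rw [map_sub, sub_eq_zero] at this
      exact this
    rw [hGm m, ← hcoeff m (m + 1) (by omega), hrec m, map_add, map_add, e1]
  intro m
  refine ⟨m, fun n hn => ?_⟩
  rw [hcoeff m n hn, ← hGm m, key hs G hG0 hGeq m]
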